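/- The subset of points in a locally two-distance set X ⊆ ℝ^d all of whose distances to other points of X are equal (i.e., |A_X(x)| = 1) forms a one-distance set, and hence has at most d+1 points; moreover if |X| ≥ d+2 this subset has at most d points. -/

import Mathlib

open scoped Classical

/-- `A_X(x)`: the set of distances from `x` to the other points of `X`. -/
noncomputable def distancesFrom {d : ℕ} (X : Finset (EuclideanSpace ℝ (Fin d)))
    (x : EuclideanSpace ℝ (Fin d)) : Finset ℝ :=
  (X.erase x).image (fun y => dist x y)

open Finset

lemma equidist_affineIndependent {E : Type*} [NormedAddCommGroup E] [InnerProductSpace ℝ E]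
    {ι : Type*} {p : ι → E} {r : ℝ} (hr : 0 < r)
    (h : ∀ i j, i ≠ j → dist (p i) (p j) = r) : AffineIndependent ℝ p := by
  rw [affineIndependent_iff]
  intro s w hw0 hwp
  set a : ι → ℝ := fun i => ‖p i‖ ^ 2 with ha
  have hinner : ∀ i j, inner ℝ (p i) (p j) =
      (a i + a j - dist (p i) (p j) ^ 2) / 2 := by
    intro i j
    have := norm_sub_sq_real (p i) (p j)
    rw [dist_eq_norm]
    simp only [ha]
    linarith
  have key : ∀ i ∈ s, ∀ j ∈ s, w i * w j * inner ℝ (p i) (p j) =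
      (w i * ((a i - r ^ 2) / 2)) * w j + (w i / 2) * (w j * a j)
        + (if i = j then w i ^ 2 * (r ^ 2 / 2) else 0) := by
    intro i _ j _
    by_cases hij : i = j
    · subst hij
      rw [hinner, if_pos rfl]
      simp only [dist_self]
      ring
    · rw [hinner, h i j hij, if_neg hij]
      ring
  have h0 : (0 : ℝ) = ∑ i ∈ s, ∑ j ∈ s, w i * w j * inner ℝ (p i) (p j) := by
    have : (0 : ℝ) = inner ℝ (∑ i ∈ s, w i • p i) (∑ j ∈ s, w j • p j) := by
      rw [hwp]; simp
    rw [this, sum_inner]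
    refine Finset.sum_congr rfl fun i hi => ?_
    rw [inner_sum]
    refine Finset.sum_congr rfl fun j hj => ?_
    rw [real_inner_smul_left, real_inner_smul_right]
    ring
  have h1 : ∑ i ∈ s, ∑ j ∈ s, w i * w j * inner ℝ (p i) (p j)
      = (r ^ 2 / 2) * ∑ i ∈ s, w i ^ 2 := by
    rw [Finset.sum_congr rfl fun i hi => Finset.sum_congr rfl fun j hj => key i hi j hj]
    simp only [Finset.sum_add_distrib]
    have e1 : ∑ i ∈ s, ∑ j ∈ s, (w i * ((a i - r ^ 2) / 2)) * w j = 0 := by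
      refine Finset.sum_eq_zero fun i _ => ?_
      rw [← Finset.mul_sum, hw0, mul_zero]
    have e2 : ∑ i ∈ s, ∑ j ∈ s, (w i / 2) * (w j * a j)
        = (∑ i ∈ s, w i / 2) * (∑ j ∈ s, w j * a j) := by
      rw [Finset.sum_mul]
      exact Finset.sum_congr rfl fun i _ => (Finset.mul_sum _ _ _).symm
    have e3 : ∑ i ∈ s, ∑ j ∈ s, (if i = j then w i ^ 2 * (r ^ 2 / 2) else 0)
        = ∑ i ∈ s, w i ^ 2 * (r ^ 2 / 2) := by
      refine Finset.sum_congr rfl fun i hi => ?_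
      rw [Finset.sum_ite_eq s i (fun _ => w i ^ 2 * (r ^ 2 / 2)), if_pos hi]
    rw [e1, e2, e3, ← Finset.sum_div, hw0]
    simp only [zero_div, zero_mul, zero_add, Finset.sum_const_zero]
    rw [Finset.mul_sum]
    exact Finset.sum_congr rfl fun i _ => by ring
  have hsum : ∑ i ∈ s, w i ^ 2 = 0 := by
    have h2 : r ^ 2 / 2 * ∑ i ∈ s, w i ^ 2 = 0 := (h0.trans h1).symm
    rcases mul_eq_zero.mp h2 with h' | h'
    · exact absurd h' (by positivity)
    · exact h'
  intro i hi
  have := (Finset.sum_eq_zero_iff_of_nonneg fun j _ => sq_nonneg (w j)).mp hsum i hi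
  exact pow_eq_zero_iff (n := 2) (by norm_num) |>.mp this

lemma equidist_card_le {d : ℕ} (S : Finset (EuclideanSpace ℝ (Fin d))) {r : ℝ} (hr : 0 < r)
    (h : ∀ x ∈ S, ∀ y ∈ S, x ≠ y → dist x y = r) : S.card ≤ d + 1 := by
  have hai : AffineIndependent ℝ (fun x : S => (x : EuclideanSpace ℝ (Fin d))) :=
    equidist_affineIndependent hr (fun i j hij =>
      h i i.2 j j.2 (fun hxy => hij (Subtype.ext hxy)))
  have hcard := hai.card_le_finrank_succ
  rw [Fintype.card_coe] at hcard
  refine hcard.trans ?_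
  have : Module.finrank ℝ (vectorSpan ℝ
      (Set.range (fun x : S => (x : EuclideanSpace ℝ (Fin d))))) ≤ d := by
    have := Submodule.finrank_le (vectorSpan ℝ
      (Set.range (fun x : S => (x : EuclideanSpace ℝ (Fin d)))))
    simpa [finrank_euclideanSpace_fin] using this
  omega

/-- In a locally two-distance set `X ⊆ ℝ^d`, the subset `S` of points `x` with `|A_X(x)| = 1`
is a one-distance set (all pairwise distances in `S` coincide), hence `|S| ≤ d + 1`;
moreover if `|X| ≥ d + 2` then `|S| ≤ d`. -/
theorem stmt2 (d : ℕ) (X : Finset (EuclideanSpace ℝ (Fin d)))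
    (hloc : ∀ x ∈ X, (distancesFrom X x).card ≤ 2) :
    (∀ x ∈ X.filter (fun x => (distancesFrom X x).card = 1),
      ∀ y ∈ X.filter (fun x => (distancesFrom X x).card = 1),
      ∀ z ∈ X.filter (fun x => (distancesFrom X x).card = 1),
      ∀ w ∈ X.filter (fun x => (distancesFrom X x).card = 1),
        x ≠ y → z ≠ w → dist x y = dist z w) ∧
    (X.filter (fun x => (distancesFrom X x).card = 1)).card ≤ d + 1 ∧
    (d + 2 ≤ X.card → (X.filter (fun x => (distancesFrom X x).card = 1)).card ≤ d) := by
  set S := X.filter (fun x => (distancesFrom X x).card = 1) with hS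
  have hSX : S ⊆ X := Finset.filter_subset _ _
  -- from a point of S, all distances to other points of X coincide
  have hsingle : ∀ x ∈ S, ∀ y ∈ X, ∀ z ∈ X, y ≠ x → z ≠ x → dist x y = dist x z := by
    intro x hx y hy z hz hyx hzx
    have hcard : (distancesFrom X x).card = 1 := (Finset.mem_filter.mp hx).2
    have h1 : dist x y ∈ distancesFrom X x :=
      Finset.mem_image_of_mem _ (Finset.mem_erase.mpr ⟨hyx, hy⟩)
    have h2 : dist x z ∈ distancesFrom X x :=
      Finset.mem_image_of_mem _ (Finset.mem_erase.mpr ⟨hzx, hz⟩)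
    exact Finset.card_le_one.mp (le_of_eq hcard) _ h1 _ h2
  have part1 : ∀ x ∈ S, ∀ y ∈ S, ∀ z ∈ S, ∀ w ∈ S,
      x ≠ y → z ≠ w → dist x y = dist z w := by
    intro x hx y hy z hz w hw hxy hzw
    by_cases hxz : x = z
    · subst hxz
      exact hsingle x hx y (hSX hy) w (hSX hw) hxy.symm hzw.symm
    · have e1 : dist x y = dist x z :=
        hsingle x hx y (hSX hy) z (hSX hz) hxy.symm (Ne.symm hxz)
      have e2 : dist z x = dist z w :=
        hsingle z hz x (hSX hx) w (hSX hw) hxz hzw.symm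
      rw [e1, dist_comm, e2]
  refine ⟨part1, ?_, ?_⟩
  · -- |S| ≤ d + 1
    by_cases h1 : S.card ≤ 1
    · omega
    · obtain ⟨x0, hx0, y0, hy0, hne⟩ := Finset.one_lt_card.mp (lt_of_not_ge h1)
      have hrpos : 0 < dist x0 y0 := dist_pos.mpr hne
      exact equidist_card_le S hrpos
        (fun x hx y hy hxy => part1 x hx y hy x0 hx0 y0 hy0 hxy hne ▸
          part1 x hx y hy x0 hx0 y0 hy0 hxy hne)
  · -- if |X| ≥ d + 2 then |S| ≤ d
    intro hXcard
    by_contra hcon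
    push_neg at hcon
    rcases Finset.eq_empty_or_nonempty S with hemp | ⟨x0, hx0⟩
    · rw [hemp] at hcon; simp at hcon
    have hScard : d + 1 ≤ S.card := hcon
    have hlt : S.card < X.card := by
      by_cases h1 : S.card ≤ 1
      · omega
      · obtain ⟨a, ha, b, hb, hab⟩ := Finset.one_lt_card.mp (lt_of_not_ge h1)
        have := equidist_card_le S (dist_pos.mpr hab)
          (fun x hx y hy hxy => part1 x hx y hy a ha b hb hxy hab)
        omega
    have hnsub : ¬ X ⊆ S := fun h => absurd (Finset.card_le_card h) (by omega)
    obtain ⟨p, hpX, hpS⟩ := Finset.not_subset.mp hnsub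
    have hpx0 : p ≠ x0 := fun h => hpS (h ▸ hx0)
    have claim : ∀ x ∈ S, ∀ y ∈ X, y ≠ x → dist x y = dist x0 p := by
      intro x hx y hy hyx
      have hpx : p ≠ x := fun h => hpS (h ▸ hx)
      have e1 : dist x y = dist x p := hsingle x hx y hy p hpX hyx hpx
      by_cases hxx0 : x = x0
      · rw [e1, hxx0]
      · have e2 : dist x p = dist x x0 :=
          hsingle x hx p hpX x0 (hSX hx0) hpx (fun h => hxx0 h.symm)
        have e3 : dist x0 x = dist x0 p :=
          hsingle x0 hx0 x (hSX hx) p hpX hxx0 hpx0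
        rw [e1, e2, dist_comm, e3]
    have hrpos : 0 < dist x0 p := dist_pos.mpr (Ne.symm hpx0)
    have hT : ∀ x ∈ insert p S, ∀ y ∈ insert p S, x ≠ y → dist x y = dist x0 p := by
      intro x hx y hy hxy
      rcases Finset.mem_insert.mp hx with rfl | hxS
      · rcases Finset.mem_insert.mp hy with rfl | hyS
        · exact absurd rfl hxy
        · rw [dist_comm]
          exact claim y hyS x hpX hxy
      · rcases Finset.mem_insert.mp hy with rfl | hyS
        · exact claim x hxS y hpX hxy.symm
        · exact claim x hxS y (hSX hyS) hxy.symm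
    have := equidist_card_le (insert p S) hrpos hT
    rw [Finset.card_insert_of_notMem hpS] at this
    omega
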